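/- Let k ≥ 3 and let G be the graph on 2k vertices {v, v_1, …, v_k, u_1, …, u_{k−1}} with edges vv_i for 1 ≤ i ≤ k, v_iu_i for 1 ≤ i ≤ k−1, v_ku_{k−1}, and u_iu_j for all 1 ≤ i < j ≤ k−1. Then both G and its complement have diameter 2. -/

import Mathlib

open SimpleGraph

/-- A coloring `c` (using colors `< k`) makes `G` rainbow vertex-connected: every pair of
vertices is joined by a path whose internal vertices receive distinct colors (all `< k`). -/
def IsRainbowVCColoring {V : Type*} (G : SimpleGraph V) (c : V → ℕ) (k : ℕ) : Prop :=
  ∀ u v : V, ∃ p : G.Walk u v, p.IsPath ∧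
    (p.support.tail.dropLast.map c).Nodup ∧
    ∀ x ∈ p.support.tail.dropLast, c x < k

/-- The rainbow vertex-connection number: the least number of colors making `G`
rainbow vertex-connected. -/
noncomputable def rvc {V : Type*} (G : SimpleGraph V) : ℕ :=
  sInf {k | ∃ c : V → ℕ, IsRainbowVCColoring G c k}

/-- The graph on `2k` vertices: hub `none`, vertices `v_i = some (inl i)` for `i : Fin k`,
`u_j = some (inr j)` for `j : Fin (k-1)`; edges `v v_i`; `v_i u_i` for `i ≤ k-2` together
with `v_{k-1} u_{k-2}` (0-indexed); and `u_i u_j` for `i ≠ j`. -/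
def evenExample (k : ℕ) : SimpleGraph (Option (Fin k ⊕ Fin (k - 1))) :=
  SimpleGraph.fromRel (fun x y =>
    match x, y with
    | none, some (Sum.inl _) => True
    | some (Sum.inl i), some (Sum.inr j) =>
        (i : ℕ) = (j : ℕ) ∨ ((i : ℕ) = k - 1 ∧ (j : ℕ) = k - 2)
    | some (Sum.inr _), some (Sum.inr _) => True
    | _, _ => False)

lemma diam_eq_two_of {V : Type*} [Nonempty V] {G : SimpleGraph V}
    (h : ∀ u v : V, u ≠ v → ¬ G.Adj u v → ∃ w, G.Adj u w ∧ G.Adj w v)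
    (h2 : ∃ u v : V, u ≠ v ∧ ¬ G.Adj u v) : G.diam = 2 := by
  have hle : G.ediam ≤ 2 := by
    apply ediam_le_of_edist_le
    intro u v
    rcases eq_or_ne u v with rfl | huv
    · simp
    by_cases ha : G.Adj u v
    · rw [edist_eq_one_iff_adj.mpr ha]; exact one_le_two
    · obtain ⟨w, hw1, hw2⟩ := h u v huv ha
      calc G.edist u v ≤ (Walk.cons hw1 (Walk.cons hw2 Walk.nil)).length := Walk.edist_le _
        _ = 2 := by simp
  obtain ⟨u, v, huv, hna⟩ := h2
  have h0 : G.edist u v ≠ 0 := edist_eq_zero_iff.ne.mpr huv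
  have h1 : G.edist u v ≠ 1 := fun h => hna (edist_eq_one_iff_adj.mp h)
  have hge : 2 ≤ G.edist u v := by
    have : 1 < G.edist u v := lt_of_le_of_ne (ENat.one_le_iff_ne_zero.mpr h0) (Ne.symm h1)
    simpa [one_add_one_eq_two] using Order.add_one_le_of_lt this
  have he : G.ediam = 2 := le_antisymm hle (le_trans hge edist_le_ediam)
  simp [SimpleGraph.diam, he]

theorem evenExample_diam (k : ℕ) (hk : 3 ≤ k) :
    (evenExample k).diam = 2 ∧ (evenExample k)ᶜ.diam = 2 := by
  have h1k : 1 < k - 1 := by omega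
  have h0k : 0 < k - 1 := by omega
  constructor
  · apply diam_eq_two_of
    · rintro (_|(i|j)) (_|(i'|j')) hne hna
      · exact absurd rfl hne
      · exact absurd (by simp [evenExample, fromRel_adj]) hna
      · -- none, u_j' : via v_{j'}
        refine ⟨some (Sum.inl ⟨j', by omega⟩), by simp [evenExample, fromRel_adj], ?_⟩
        simp [evenExample, fromRel_adj]
      · exact absurd (by simp [evenExample, fromRel_adj]) hna
      · exact ⟨none, by simp [evenExample, fromRel_adj], by simp [evenExample, fromRel_adj]⟩
      · -- v_i, u_j'
        by_cases hi : (i : ℕ) = k - 1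
        · have hj' : (j' : ℕ) ≠ k - 2 := by
            intro h; exact hna (by simp [evenExample, fromRel_adj]; omega)
          refine ⟨some (Sum.inr ⟨k-2, by omega⟩), ?_, ?_⟩
          · simp [evenExample, fromRel_adj]; omega
          · simp [evenExample, fromRel_adj, Fin.ext_iff]; omega
        · have hij : (i : ℕ) ≠ (j' : ℕ) := by
            intro h; exact hna (by simp [evenExample, fromRel_adj]; omega)
          have hik : (i : ℕ) < k - 1 := by have := i.2; omega
          refine ⟨some (Sum.inr ⟨i, hik⟩), ?_, ?_⟩
          · simp [evenExample, fromRel_adj]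
          · simp [evenExample, fromRel_adj, Fin.ext_iff]; omega
      · -- u_j, none
        refine ⟨some (Sum.inl ⟨j, by omega⟩), ?_, by simp [evenExample, fromRel_adj]⟩
        simp [evenExample, fromRel_adj]
      · -- u_j, v_i'
        by_cases hi : (i' : ℕ) = k - 1
        · have hj : (j : ℕ) ≠ k - 2 := by
            intro h; exact hna (by simp [evenExample, fromRel_adj]; omega)
          refine ⟨some (Sum.inr ⟨k-2, by omega⟩), ?_, ?_⟩
          · simp [evenExample, fromRel_adj, Fin.ext_iff]; omega
          · simp [evenExample, fromRel_adj]; omega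
        · have hij : (i' : ℕ) ≠ (j : ℕ) := by
            intro h; exact hna (by simp [evenExample, fromRel_adj]; omega)
          have hik : (i' : ℕ) < k - 1 := by have := i'.2; omega
          refine ⟨some (Sum.inr ⟨i', hik⟩), ?_, ?_⟩
          · simp [evenExample, fromRel_adj, Fin.ext_iff]; omega
          · simp [evenExample, fromRel_adj]
      · -- u_j, u_j' with j ≠ j': adjacent, contradiction
        have : j ≠ j' := by rintro rfl; exact hne rfl
        exact absurd (by simp [evenExample, fromRel_adj, this]) hna
    · refine ⟨none, some (Sum.inr ⟨0, h0k⟩), by simp, ?_⟩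
      simp [evenExample, fromRel_adj]
  · apply diam_eq_two_of
    · rintro (_|(i|j)) (_|(i'|j')) hne hna
      · exact absurd rfl hne
      · -- none, v_i' : via u_m, m ≠ i' and (m,i') correct
        refine ⟨some (Sum.inr (if (i' : ℕ) = 0 then ⟨1, h1k⟩ else ⟨0, h0k⟩)), ?_, ?_⟩
        · simp [compl_adj, evenExample, fromRel_adj]
        · by_cases h0 : (i' : ℕ) = 0 <;>
            simp [h0, compl_adj, evenExample, fromRel_adj] <;> omega
      · exact absurd (by simp [compl_adj, evenExample, fromRel_adj]) hna
      · -- v_i, none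
        refine ⟨some (Sum.inr (if (i : ℕ) = 0 then ⟨1, h1k⟩ else ⟨0, h0k⟩)), ?_, ?_⟩
        · by_cases h0 : (i : ℕ) = 0 <;>
            simp [h0, compl_adj, evenExample, fromRel_adj] <;> omega
        · simp [compl_adj, evenExample, fromRel_adj]
      · -- v_i, v_i' distinct: complement-adjacent, contradiction
        have hii : i ≠ i' := by rintro rfl; exact hne rfl
        exact absurd (by simp [compl_adj, evenExample, fromRel_adj, hii]) hna
      · -- v_i, u_j' : via v_m with m.1 ∈ {0,1}, m ≠ i
        refine ⟨some (Sum.inl (if (i : ℕ) = 0 then ⟨1, by omega⟩ else ⟨0, by omega⟩)), ?_, ?_⟩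
        · by_cases h0 : (i : ℕ) = 0 <;>
            simp [h0, compl_adj, evenExample, fromRel_adj, Fin.ext_iff] <;> omega
        · -- need ¬(m = j' ∨ (m = k-1 ∧ j' = k-2)); since ¬compl-Adj, G-adj: i=j' ∨ (i=k-1∧j'=k-2)
          have hadj : (i : ℕ) = (j' : ℕ) ∨ ((i : ℕ) = k - 1 ∧ (j' : ℕ) = k - 2) := by
            by_contra hc
            exact hna (by simp [compl_adj, evenExample, fromRel_adj]; tauto)
          by_cases h0 : (i : ℕ) = 0 <;>
            simp [h0, compl_adj, evenExample, fromRel_adj] <;> omega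
      · exact absurd (by simp [compl_adj, evenExample, fromRel_adj]) hna
      · -- u_j, v_i'
        refine ⟨some (Sum.inl (if (i' : ℕ) = 0 then ⟨1, by omega⟩ else ⟨0, by omega⟩)), ?_, ?_⟩
        · have hadj : (i' : ℕ) = (j : ℕ) ∨ ((i' : ℕ) = k - 1 ∧ (j : ℕ) = k - 2) := by
            by_contra hc
            exact hna (by simp [compl_adj, evenExample, fromRel_adj]; tauto)
          by_cases h0 : (i' : ℕ) = 0 <;>
            simp [h0, compl_adj, evenExample, fromRel_adj] <;> omega
        · by_cases h0 : (i' : ℕ) = 0 <;>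
            simp [h0, compl_adj, evenExample, fromRel_adj, Fin.ext_iff] <;> omega
      · -- u_j, u_j' : via none
        exact ⟨none, by simp [compl_adj, evenExample, fromRel_adj],
          by simp [compl_adj, evenExample, fromRel_adj]⟩
    · refine ⟨none, some (Sum.inl ⟨0, by omega⟩), by simp, ?_⟩
      simp [compl_adj, evenExample, fromRel_adj]
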